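/- For the n-dimensional hypercube C_n with indeterminate weights x_{i,ε} assigned to oriented edges of direction i and spin ε, the weighted rooted-forest enumerator satisfies F_{C_n}(t; x) = ∏_{S ⊆ [n]} ( t + ∑_{i ∈ S} (x_{i,0} + x_{i,1}) ). -/

import Mathlib

open scoped Classical
open Polynomial

noncomputable section

/-- A rooted (spanning) forest of the digraph with arc relation `A`:
every vertex has at most one outgoing arc (encoded by `f : V → Option V`),
all arcs of the forest are arcs of the digraph, and there is no directed cycle. -/
def IsRootedForest {V : Type*} (A : V → V → Prop) (f : V → Option V) : Prop :=
  (∀ v w : V, f v = some w → A v w) ∧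
  ∀ v : V, ¬ Relation.TransGen (fun a b : V => f a = some b) v v

/-- The number of components (= roots) of a rooted forest. -/
def numRoots {V : Type*} [Fintype V] (f : V → Option V) : ℕ :=
  (Finset.univ.filter fun v => f v = none).card

/-- The rooted-forest enumerator of a weighted digraph:
`∑_F t^(#components of F) ∏_{arcs (v,w) ∈ F} wgt v w`. -/
def forestEnum {V : Type*} [Fintype V] {R : Type*} [CommRing R]
    (A : V → V → Prop) (wgt : V → V → R) (t : R) : R :=
  ∑ f ∈ Finset.univ.filter (fun f : V → Option V => IsRootedForest A f),
    ∏ v : V, (f v).elim t (wgt v)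

/-- Arc relation of the `n`-dimensional hypercube on `{0,1}^n`:
an arc from `u` to `v` flips exactly one coordinate. -/
def cubeArc (n : ℕ) (u v : Fin n → Bool) : Prop :=
  ∃ i : Fin n, v = Function.update u i (!(u i))

/-- Weight of a hypercube arc: an arc of direction `i` and spin `ε`
(i.e. flipping coordinate `i` to the value `ε`) has weight `x i ε`. -/
def cubeWeight {R : Type*} [CommRing R] (n : ℕ) (x : Fin n → Bool → R)
    (u v : Fin n → Bool) : R :=
  ∑ i : Fin n, if v = Function.update u i (!(u i)) then x i (v i) else 0

end

/-! ### Auxiliary development for the proof -/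

noncomputable section HWFEAux

namespace HWFE

set_option linter.unusedSectionVars false

open Finset Equiv Relation

variable {V : Type*} [Fintype V] [DecidableEq V] {R : Type*} [CommRing R]

/-- The "step" function of a partial function `f : V → Option V`. -/
def fwd (f : V → Option V) : V → V := fun v => (f v).getD v

/-- A permutation is compatible with `f` if it agrees with `f` away from fixed points. -/
def Compat (f : V → Option V) (σ : Equiv.Perm V) : Prop :=
  ∀ v : V, σ v ≠ v → f v = some (σ v)

theorem compat_one (f : V → Option V) : Compat f 1 := fun _ hv => absurd rfl hv

theorem transGen_iterate {f : V → Option V} {a b : V}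
    (h : Relation.TransGen (fun a b : V => f a = some b) a b) :
    ∃ m : ℕ, 0 < m ∧ (fwd f)^[m] a = b ∧
      ∀ j < m, f ((fwd f)^[j] a) = some ((fwd f)^[j + 1] a) := by
  induction h with
  | single hstep =>
      refine ⟨1, one_pos, by simp [fwd, hstep], ?_⟩
      intro j hj
      have : j = 0 := Nat.lt_one_iff.mp hj
      subst this
      simp [fwd, hstep]
  | tail hab hbc ih =>
      obtain ⟨m, hm, hfb, hsteps⟩ := ih
      refine ⟨m + 1, Nat.succ_pos _, ?_, ?_⟩
      · rw [Function.iterate_succ_apply', hfb]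
        simp [fwd, hbc]
      · intro j hj
        rcases Nat.lt_succ_iff_lt_or_eq.mp hj with hj' | rfl
        · exact hsteps j hj'
        · rw [hfb, Function.iterate_succ_apply', hfb]
          simp [fwd, hbc]

theorem transGen_of_ne {f : V → Option V} {σ : Equiv.Perm V} (hc : Compat f σ)
    {v : V} (hv : σ v ≠ v) :
    Relation.TransGen (fun a b : V => f a = some b) v v := by
  have hsupp : ∀ j : ℕ, σ ((⇑σ)^[j] v) ≠ (⇑σ)^[j] v := by
    intro j
    induction j with
    | zero => simpa using hv
    | succ j ih =>
        rw [Function.iterate_succ_apply']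
        intro h
        exact ih (σ.injective h)
  have hchain : ∀ j : ℕ,
      Relation.TransGen (fun a b : V => f a = some b) v ((⇑σ)^[j + 1] v) := by
    intro j
    induction j with
    | zero => exact Relation.TransGen.single (by simpa using hc v hv)
    | succ j ih =>
        refine Relation.TransGen.tail ih ?_
        rw [Function.iterate_succ_apply' (⇑σ) (j + 1) v]
        exact hc _ (hsupp (j + 1))
  have hord : 0 < orderOf σ := orderOf_pos σ
  obtain ⟨m, hm⟩ := Nat.exists_eq_succ_of_ne_zero hord.ne'
  have hfix : (⇑σ)^[orderOf σ] v = v := by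
    rw [← Equiv.Perm.coe_pow, pow_orderOf_eq_one]; rfl
  have := hchain m
  rw [show m + 1 = orderOf σ from hm.symm, hfix] at this
  exact this

theorem compat_sum (f : V → Option V) (hloop : ∀ v : V, f v ≠ some v) :
    (∑ σ ∈ Finset.univ.filter fun σ : Equiv.Perm V => Compat f σ,
        ((Equiv.Perm.sign σ : ℤ) : R) * (-1 : R) ^ σ.support.card) =
      (if ∀ v : V, ¬ Relation.TransGen (fun a b : V => f a = some b) v v
        then (1 : R) else 0) := by
  by_cases hAc : ∀ v : V, ¬ Relation.TransGen (fun a b : V => f a = some b) v v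
  · rw [if_pos hAc]
    have hsingle : (Finset.univ.filter fun σ : Equiv.Perm V => Compat f σ) = {1} := by
      apply Finset.eq_singleton_iff_unique_mem.mpr
      refine ⟨Finset.mem_filter.mpr ⟨Finset.mem_univ _, compat_one f⟩, ?_⟩
      intro σ hσ
      have hcomp : Compat f σ := (Finset.mem_filter.mp hσ).2
      by_contra hne
      have : ¬ ∀ v, σ v = v := fun h => hne (Equiv.ext h)
      push_neg at this
      obtain ⟨v, hv⟩ := this
      exact hAc v (transGen_of_ne hcomp hv)
    rw [hsingle, Finset.sum_singleton]
    simp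
  · rw [if_neg hAc]
    push_neg at hAc
    obtain ⟨v0, hv0⟩ := hAc
    set g : V → V := fwd f with hgdef
    obtain ⟨m, hm, hgm, hsteps⟩ := transGen_iterate hv0
    have hex : ∃ km : ℕ, 0 < km ∧ g^[km] v0 = v0 := ⟨m, hm, hgm⟩
    set k : ℕ := Nat.find hex with hkdef
    obtain ⟨hkpos, hgk⟩ : 0 < k ∧ g^[k] v0 = v0 := Nat.find_spec hex
    have hkm : k ≤ m := Nat.find_min' hex ⟨hm, hgm⟩
    have hmin : ∀ j, 0 < j → j < k → g^[j] v0 ≠ v0 := by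
      intro j hj hjk hne
      exact Nat.find_min hex hjk ⟨hj, hne⟩
    have hstep : ∀ j, j < k → f (g^[j] v0) = some (g^[j + 1] v0) :=
      fun j hj => hsteps j (lt_of_lt_of_le hj hkm)
    have hperiod : ∀ q r : ℕ, g^[k * q + r] v0 = g^[r] v0 := by
      intro q
      induction q with
      | zero => simp
      | succ q ih =>
          intro r
          have : k * (q + 1) + r = (k * q + r) + k := by ring
          rw [this, Function.iterate_add_apply, hgk, ih r]
    have hper : ∀ j : ℕ, g^[j % k] v0 = g^[j] v0 := by
      intro j
      conv_rhs => rw [show j = k * (j / k) + j % k from (Nat.div_add_mod j k).symm]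
      rw [hperiod]
    have hk2 : 2 ≤ k := by
      rcases Nat.lt_or_ge k 2 with hlt | h2
      · exfalso
        have hk1 : k = 1 := by omega
        have h0 := hstep 0 hkpos
        have hg1 : g^[0 + 1] v0 = v0 := by rw [hk1] at hgk; simpa using hgk
        rw [hg1] at h0
        simp only [Function.iterate_zero_apply] at h0
        exact hloop v0 h0
      · exact h2
    set l : List V := (List.range k).map (fun j => g^[j] v0) with hldef
    have hlen : l.length = k := by simp [hldef]
    have hmeml : ∀ {w : V}, w ∈ l ↔ ∃ j, j < k ∧ w = g^[j] v0 := by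
      intro w; simp [hldef, List.mem_map, List.mem_range]
    have hnodup : l.Nodup := by
      rw [hldef]
      refine List.Nodup.map_on ?_ List.nodup_range
      intro i hi j hj hij
      rw [List.mem_range] at hi hj
      by_contra hne
      have key : ∀ a b : ℕ, a < b → b < k → g^[a] v0 ≠ g^[b] v0 := by
        intro a b hab hbk heq
        have h1 : g^[(k - b) + a] v0 = v0 := by
          rw [Function.iterate_add_apply, heq, ← Function.iterate_add_apply,
            show k - b + b = k by omega, hgk]
        exact hmin ((k - b) + a) (by omega) (by omega) h1
      rcases lt_or_gt_of_ne hne with h | h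
      · exact key i j h hj hij
      · exact key j i h hi hij.symm
    have hv0l : v0 ∈ l := hmeml.mpr ⟨0, hkpos, rfl⟩
    have hne1 : ∀ y : V, l ≠ [y] := by
      intro y hy
      rw [hy] at hlen
      simp at hlen
      omega
    set c : Equiv.Perm V := l.formPerm with hcdef
    have hsuppc : c.support = l.toFinset := List.support_formPerm_of_nodup l hnodup hne1
    have hcardl : l.toFinset.card = k := by
      rw [List.toFinset_card_of_nodup hnodup, hlen]
    have hcardc : c.support.card = k := by rw [hsuppc, hcardl]
    have hcyc : c.IsCycle := List.isCycle_formPerm hnodup (by omega)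
    have hsignc : Equiv.Perm.sign c = -(-1) ^ k := by rw [hcyc.sign, hcardc]
    have hcapp : ∀ j, j < k → c (g^[j] v0) = g^[j + 1] v0 := by
      intro j hj
      have hjl : j < l.length := by omega
      have h2 := List.formPerm_apply_getElem l hnodup j hjl
      have hlj : l[j]'hjl = g^[j] v0 := by
        simp only [hldef, List.getElem_map, List.getElem_range]
      have hmod : (j + 1) % l.length < l.length := Nat.mod_lt _ (by omega)
      have hlj2 : l[(j + 1) % l.length]'hmod = g^[j + 1] v0 := by
        simp only [hldef, List.getElem_map, List.getElem_range, List.length_map,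
          List.length_range]
        exact hper (j + 1)
      rw [hlj] at h2
      rw [h2, hlj2]
    have hcg : ∀ w ∈ l, c w = g w := by
      intro w hw
      obtain ⟨j, hj, rfl⟩ := hmeml.mp hw
      rw [hcapp j hj, Function.iterate_succ_apply']
    have hfg : ∀ w ∈ l, f w = some (g w) := by
      intro w hw
      obtain ⟨j, hj, rfl⟩ := hmeml.mp hw
      rw [← Function.iterate_succ_apply' g j v0]
      exact hstep j hj
    have hgmem : ∀ w ∈ l, g w ∈ l := by
      intro w hw
      obtain ⟨j, hj, rfl⟩ := hmeml.mp hw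
      rw [← Function.iterate_succ_apply' g j v0]
      exact hmeml.mpr ⟨(j + 1) % k, Nat.mod_lt _ hkpos, (hper (j + 1)).symm⟩
    have hcne1 : c ≠ 1 := by
      intro h
      have hv0s : v0 ∈ c.support := by rw [hsuppc]; exact List.mem_toFinset.mpr hv0l
      rw [h, Equiv.Perm.support_one] at hv0s
      exact absurd hv0s (Finset.notMem_empty v0)
    -- dichotomy
    have dich : ∀ σ : Equiv.Perm V, Compat f σ →
        Disjoint σ.support l.toFinset ∨ ∀ w ∈ l, σ w = g w ∧ w ∈ σ.support := by
      intro σ hσ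
      by_cases hd : Disjoint σ.support l.toFinset
      · exact Or.inl hd
      · right
        rw [Finset.disjoint_left] at hd
        push_neg at hd
        obtain ⟨w0, hw0s, hw0l'⟩ := hd
        have hw0l : w0 ∈ l := List.mem_toFinset.mp hw0l'
        have hstep2 : ∀ w ∈ l, w ∈ σ.support → σ w = g w ∧ g w ∈ σ.support := by
          intro w hw hws
          have hne := Equiv.Perm.mem_support.mp hws
          have h1 : f w = some (σ w) := hσ w hne
          rw [hfg w hw] at h1
          have h2 : σ w = g w := (Option.some_inj.mp h1).symm
          exact ⟨h2, h2 ▸ Equiv.Perm.apply_mem_support.mpr hws⟩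
        have hiter : ∀ j : ℕ, g^[j] w0 ∈ σ.support ∧ g^[j] w0 ∈ l := by
          intro j
          induction j with
          | zero => exact ⟨hw0s, hw0l⟩
          | succ j ih =>
              rw [Function.iterate_succ_apply']
              exact ⟨(hstep2 _ ih.2 ih.1).2, hgmem _ ih.2⟩
        intro w hw
        obtain ⟨a, ha, haw⟩ := hmeml.mp hw
        obtain ⟨i, hi, hiw⟩ := hmeml.mp hw0l
        have hw_eq : g^[a + k - i] w0 = w := by
          rw [hiw, ← Function.iterate_add_apply, show a + k - i + i = a + k by omega,
            Function.iterate_add_apply, hgk]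
          exact haw.symm
        have hj := hiter (a + k - i)
        rw [hw_eq] at hj
        exact ⟨(hstep2 w hw hj.1).1, hj.1⟩
    -- effect of multiplying by c
    have hmulc : ∀ σ : Equiv.Perm V, Compat f σ → Disjoint σ.support l.toFinset →
        Compat f (σ * c) ∧ (σ * c).support.card = σ.support.card + k ∧
          ¬ Disjoint (σ * c).support l.toFinset := by
      intro σ hσ hd
      have hdp : σ.Disjoint c :=
        Equiv.Perm.disjoint_iff_disjoint_support.mpr (by rw [hsuppc]; exact hd)
      have happ : ∀ v, (σ * c) v = if v ∈ l then g v else σ v := by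
        intro v
        by_cases hv : v ∈ l
        · rw [if_pos hv]
          have h3 : σ (g v) = g v := by
            have : g v ∉ σ.support :=
              Finset.disjoint_right.mp hd (List.mem_toFinset.mpr (hgmem v hv))
            exact Equiv.Perm.notMem_support.mp this
          simp [Equiv.Perm.mul_apply, hcg v hv, h3]
        · rw [if_neg hv]
          have : c v = v := by
            apply Equiv.Perm.notMem_support.mp
            rw [hsuppc]
            exact fun h => hv (List.mem_toFinset.mp h)
          simp [Equiv.Perm.mul_apply, this]
      refine ⟨?_, ?_, ?_⟩
      · intro v hv
        rw [happ v] at hv ⊢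
        by_cases hvl : v ∈ l
        · rw [if_pos hvl]; exact hfg v hvl
        · rw [if_neg hvl] at hv ⊢; exact hσ v hv
      · rw [hdp.card_support_mul, hcardc]
      · rw [hdp.support_mul]
        apply Finset.not_disjoint_iff.mpr
        refine ⟨v0, Finset.mem_union_right _ ?_, List.mem_toFinset.mpr hv0l⟩
        rw [hsuppc]; exact List.mem_toFinset.mpr hv0l
    have hmulcinv : ∀ σ : Equiv.Perm V, Compat f σ →
        (∀ w ∈ l, σ w = g w ∧ w ∈ σ.support) →
        Compat f (σ * c⁻¹) ∧ σ.support.card = (σ * c⁻¹).support.card + k ∧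
          Disjoint (σ * c⁻¹).support l.toFinset := by
      intro σ hσ hsub
      have happ : ∀ v, (σ * c⁻¹) v = if v ∈ l then v else σ v := by
        intro v
        by_cases hv : v ∈ l
        · rw [if_pos hv]
          have hv' : c⁻¹ v ∈ l := by
            have h1 : c⁻¹ v ∈ (c⁻¹).support ↔ v ∈ (c⁻¹).support :=
              Equiv.Perm.apply_mem_support
            rw [Equiv.Perm.support_inv, hsuppc] at h1
            exact List.mem_toFinset.mp (h1.mpr (List.mem_toFinset.mpr hv))
          have h2 : σ (c⁻¹ v) = g (c⁻¹ v) := (hsub _ hv').1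
          have h3 : g (c⁻¹ v) = c (c⁻¹ v) := (hcg _ hv').symm
          rw [Equiv.Perm.mul_apply, h2, h3]; exact c.apply_symm_apply v
        · rw [if_neg hv]
          have : c⁻¹ v = v := by
            apply Equiv.Perm.notMem_support.mp
            rw [Equiv.Perm.support_inv, hsuppc]
            exact fun h => hv (List.mem_toFinset.mp h)
          simp [Equiv.Perm.mul_apply, this]
      have hsupp' : (σ * c⁻¹).support = σ.support \ l.toFinset := by
        ext v
        rw [Equiv.Perm.mem_support, happ v]
        by_cases hv : v ∈ l
        · simp [hv, List.mem_toFinset.mpr hv]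
        · simp [hv, Finset.mem_sdiff, Equiv.Perm.mem_support,
            fun h => hv (List.mem_toFinset.mp h)]
      have hsubs : l.toFinset ⊆ σ.support := fun w hw => (hsub w (List.mem_toFinset.mp hw)).2
      refine ⟨?_, ?_, ?_⟩
      · intro v hv
        rw [happ v] at hv ⊢
        by_cases hvl : v ∈ l
        · rw [if_pos hvl] at hv; exact absurd rfl hv
        · rw [if_neg hvl] at hv ⊢; exact hσ v hv
      · rw [hsupp', Finset.card_sdiff_of_subset hsubs, hcardl]
        have := Finset.card_le_card hsubs
        rw [hcardl] at this
        omega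
      · rw [hsupp']; exact Finset.sdiff_disjoint
    -- the involution
    have hsq : (-1 : R) ^ k * (-1 : R) ^ k = 1 := by
      rw [← pow_add]
      exact Even.neg_one_pow ⟨k, rfl⟩
    apply Finset.sum_involution
      (g := fun σ _ => if Disjoint σ.support l.toFinset then σ * c else σ * c⁻¹)
    · -- sum of paired terms is zero
      intro σ hσmem
      have hcomp : Compat f σ := (Finset.mem_filter.mp hσmem).2
      by_cases hd : Disjoint σ.support l.toFinset
      · rw [if_pos hd]
        obtain ⟨-, hcard, -⟩ := hmulc σ hcomp hd
        have hsgn : ((Equiv.Perm.sign (σ * c) : ℤ) : R) =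
            ((Equiv.Perm.sign σ : ℤ) : R) * (-(-1 : R) ^ k) := by
          rw [map_mul, hsignc]
          push_cast
          ring
        rw [hcard, hsgn, pow_add]
        linear_combination (-(((Equiv.Perm.sign σ : ℤ) : R) * (-1 : R) ^ σ.support.card)) * hsq
      · rw [if_neg hd]
        have hsub := (dich σ hcomp).resolve_left hd
        obtain ⟨-, hcard, -⟩ := hmulcinv σ hcomp hsub
        have hsgn : ((Equiv.Perm.sign (σ * c⁻¹) : ℤ) : R) =
            ((Equiv.Perm.sign σ : ℤ) : R) * (-(-1 : R) ^ k) := by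
          rw [map_mul, Equiv.Perm.sign_inv, hsignc]
          push_cast
          ring
        rw [hcard, hsgn, pow_add]
        ring
    · -- the involution has no fixed point
      intro σ hσmem _
      by_cases hd : Disjoint σ.support l.toFinset
      · rw [if_pos hd]
        intro h
        exact hcne1 (mul_left_cancel (h.trans (mul_one σ).symm))
      · rw [if_neg hd]
        intro h
        exact hcne1 (inv_eq_one.mp (mul_left_cancel (h.trans (mul_one σ).symm)))
    · -- the involution maps the set to itself
      intro σ hσmem
      have hcomp : Compat f σ := (Finset.mem_filter.mp hσmem).2
      by_cases hd : Disjoint σ.support l.toFinset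
      · rw [if_pos hd]
        exact Finset.mem_filter.mpr ⟨Finset.mem_univ _, (hmulc σ hcomp hd).1⟩
      · rw [if_neg hd]
        have hsub := (dich σ hcomp).resolve_left hd
        exact Finset.mem_filter.mpr ⟨Finset.mem_univ _, (hmulcinv σ hcomp hsub).1⟩
    · -- involutive
      intro σ hσmem
      have hcomp : Compat f σ := (Finset.mem_filter.mp hσmem).2
      by_cases hd : Disjoint σ.support l.toFinset
      · rw [if_pos hd]
        obtain ⟨-, -, hnd⟩ := hmulc σ hcomp hd
        rw [if_neg hnd, mul_inv_cancel_right]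
      · rw [if_neg hd]
        have hsub := (dich σ hcomp).resolve_left hd
        obtain ⟨-, -, hd'⟩ := hmulcinv σ hcomp hsub
        rw [if_pos hd', inv_mul_cancel_right]

theorem forestEnum_eq_det (A : V → V → Prop) (wgt : V → V → R) (t : R)
    (hdiag : ∀ v, wgt v v = 0) (hA : ∀ v w, ¬ A v w → wgt v w = 0) :
    forestEnum A wgt t =
      (Matrix.of fun v w : V =>
        (if v = w then t + ∑ u, wgt v u else 0) - wgt v w).det := by
  classical
  set M : Matrix V V R :=
    Matrix.of fun v w : V => (if v = w then t + ∑ u, wgt v u else 0) - wgt v w with hM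
  have hMapp : ∀ v w, M v w = (if v = w then t + ∑ u, wgt v u else 0) - wgt v w :=
    fun v w => rfl
  set H : Equiv.Perm V → V → Option V → R := fun σ v o =>
    if σ v = v then o.elim t (wgt v)
    else (if o = some (σ v) then -wgt v (σ v) else 0) with hH
  have hdet : M.det = ∑ σ : Equiv.Perm V,
      ((Equiv.Perm.sign σ : ℤ) : R) * ∏ v, M v (σ v) := by
    rw [← Matrix.det_transpose, Matrix.det_apply']
    exact Finset.sum_congr rfl fun σ _ => by simp [Matrix.transpose_apply]
  have hrow : ∀ σ : Equiv.Perm V,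
      ∏ v, M v (σ v) = ∑ f : V → Option V, ∏ v, H σ v (f v) := by
    intro σ
    have h1 : ∏ v, M v (σ v) = ∏ v, ∑ o : Option V, H σ v o := by
      refine Finset.prod_congr rfl fun v _ => ?_
      by_cases hv : σ v = v
      · rw [hMapp, hv, if_pos rfl, hdiag, sub_zero]
        rw [Fintype.sum_option]
        simp [hH, hv]
      · rw [hMapp, if_neg (fun h => hv h.symm), zero_sub]
        simp only [hH, if_neg hv]
        rw [Finset.sum_ite_eq' Finset.univ (some (σ v))
          (fun _ => -wgt v (σ v))]
        simp
    rw [h1, Finset.prod_univ_sum]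
    rw [Fintype.piFinset_univ]
  have hperf : ∀ f : V → Option V,
      (∑ σ : Equiv.Perm V, ((Equiv.Perm.sign σ : ℤ) : R) * ∏ v, H σ v (f v)) =
      (if IsRootedForest A f then (1 : R) else 0) * ∏ v, (f v).elim t (wgt v) := by
    intro f
    by_cases hloop : ∀ v, f v ≠ some v
    · -- no self-loops
      have hzero : ∀ σ : Equiv.Perm V, ¬ Compat f σ → ∏ v, H σ v (f v) = 0 := by
        intro σ hσ
        rw [Compat] at hσ
        push_neg at hσ
        obtain ⟨v, hv, hfv⟩ := hσ
        refine Finset.prod_eq_zero (Finset.mem_univ v) ?_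
        simp only [hH, if_neg hv]
        rw [if_neg]
        intro h
        exact hfv (h ▸ rfl)
      have hfilter :
          (∑ σ : Equiv.Perm V, ((Equiv.Perm.sign σ : ℤ) : R) * ∏ v, H σ v (f v)) =
          ∑ σ ∈ Finset.univ.filter fun σ : Equiv.Perm V => Compat f σ,
            ((Equiv.Perm.sign σ : ℤ) : R) * ∏ v, H σ v (f v) := by
        symm
        apply Finset.sum_filter_of_ne
        intro σ _ hne
        by_contra hcomp
        exact hne (by rw [hzero σ hcomp, mul_zero])
      have hcompat_val : ∀ σ : Equiv.Perm V, Compat f σ →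
          ∏ v, H σ v (f v) =
            (-1 : R) ^ σ.support.card * ∏ v, (f v).elim t (wgt v) := by
        intro σ hσ
        have hpt : ∀ v, H σ v (f v) =
            (if σ v = v then (1 : R) else -1) * (f v).elim t (wgt v) := by
          intro v
          by_cases hv : σ v = v
          · simp [hH, hv]
          · have hfv : f v = some (σ v) := hσ v hv
            simp [hH, hv, hfv]
        rw [Finset.prod_congr rfl fun v _ => hpt v, Finset.prod_mul_distrib]
        congr 1
        rw [Finset.prod_ite, Finset.prod_const_one, Finset.prod_const, one_mul]
        congr 2
      have hsum := compat_sum (R := R) f hloop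
      rw [hfilter, Finset.sum_congr rfl (fun σ hσ => by
        rw [hcompat_val σ (Finset.mem_filter.mp hσ).2, ← mul_assoc]),
        ← Finset.sum_mul, hsum]
      -- now compare the two indicators
      by_cases hac : ∀ v : V, ¬ Relation.TransGen (fun a b : V => f a = some b) v v
      · rw [if_pos hac]
        by_cases harc : ∀ v w : V, f v = some w → A v w
        · rw [if_pos ⟨harc, hac⟩]
        · rw [if_neg (fun h : IsRootedForest A f => harc h.1)]
          push_neg at harc
          obtain ⟨v, w, hvw, hnA⟩ := harc
          have : ∏ v, (f v).elim t (wgt v) = 0 := by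
            refine Finset.prod_eq_zero (Finset.mem_univ v) ?_
            rw [hvw]
            simpa using hA v w hnA
          rw [this, mul_zero, mul_zero]
      · rw [if_neg hac, if_neg (fun h : IsRootedForest A f => hac h.2)]
    · -- f has a self-loop
      push_neg at hloop
      obtain ⟨v, hv⟩ := hloop
      have hW : ∏ v, (f v).elim t (wgt v) = 0 := by
        refine Finset.prod_eq_zero (Finset.mem_univ v) ?_
        rw [hv]
        simpa using hdiag v
      rw [hW, mul_zero]
      refine Finset.sum_eq_zero fun σ _ => ?_
      have : H σ v (f v) = 0 := by
        by_cases hσv : σ v = v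
        · simp [hH, hσv, hv, hdiag v]
        · simp only [hH, if_neg hσv, hv]
          rw [if_neg]
          intro h
          exact hσv (Option.some_inj.mp h).symm
      rw [Finset.prod_eq_zero (Finset.mem_univ v) this, mul_zero]
  calc forestEnum A wgt t
      = ∑ f : V → Option V,
          (if IsRootedForest A f then (1 : R) else 0) * ∏ v, (f v).elim t (wgt v) := by
        rw [forestEnum, Finset.sum_filter]
        apply Finset.sum_congr
        · congr!
        · intro f _
          split <;> simp
    _ = ∑ f : V → Option V, ∑ σ : Equiv.Perm V,
          ((Equiv.Perm.sign σ : ℤ) : R) * ∏ v, H σ v (f v) :=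
        (Finset.sum_congr rfl fun f _ => (hperf f).symm)
    _ = ∑ σ : Equiv.Perm V, ∑ f : V → Option V,
          ((Equiv.Perm.sign σ : ℤ) : R) * ∏ v, H σ v (f v) := Finset.sum_comm
    _ = M.det := by
        rw [hdet]
        refine Finset.sum_congr rfl fun σ _ => ?_
        rw [hrow σ, Finset.mul_sum]

section Cube

variable {R : Type*} [CommRing R]

theorem sum_cubeWeight (n : ℕ) (x : Fin n → Bool → R) (u : Fin n → Bool) :
    ∑ w, cubeWeight n x u w = ∑ i, x i (!(u i)) := by
  unfold cubeWeight
  rw [Finset.sum_comm]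
  refine Finset.sum_congr rfl fun i _ => ?_
  rw [Finset.sum_ite_eq' Finset.univ (Function.update u i (!(u i)))
    (fun w => x i (w i))]
  simp

/-- The matrix `t·I + L` for the hypercube. -/
def cubeM (n : ℕ) (x : Fin n → Bool → R) (t : R) :
    Matrix (Fin n → Bool) (Fin n → Bool) R :=
  Matrix.of fun u v => (if u = v then t + ∑ i, x i (!(u i)) else 0) - cubeWeight n x u v

theorem cubeM_shift (n : ℕ) (x : Fin n → Bool → R) (t s : R) :
    cubeM n x (t + s) = cubeM n x t + s • (1 : Matrix (Fin n → Bool) (Fin n → Bool) R) := by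
  ext u v
  simp only [cubeM, Matrix.of_apply, Matrix.add_apply, Matrix.smul_apply, Matrix.one_apply,
    smul_eq_mul]
  by_cases h : u = v <;> simp [h] <;> ring

/-- Splitting the cube along the first coordinate. -/
def splitCube (n : ℕ) : (Fin (n + 1) → Bool) ≃ ((Fin n → Bool) ⊕ (Fin n → Bool)) where
  toFun u := if u 0 = true then Sum.inr (fun j => u j.succ) else Sum.inl (fun j => u j.succ)
  invFun s := Sum.elim (fun w : Fin n → Bool => (Fin.cons false w : Fin (n + 1) → Bool))
    (fun w : Fin n → Bool => (Fin.cons true w : Fin (n + 1) → Bool)) s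
  left_inv u := by
    dsimp only
    by_cases h : u 0 = true
    · rw [if_pos h]
      dsimp only [Sum.elim_inr]
      conv_rhs => rw [← Fin.cons_self_tail u]
      rw [h]
      rfl
    · rw [if_neg h]
      dsimp only [Sum.elim_inl]
      conv_rhs => rw [← Fin.cons_self_tail u]
      rw [Bool.not_eq_true] at h
      rw [h]
      rfl
  right_inv s := by
    rcases s with w | w <;> dsimp only [Sum.elim_inl, Sum.elim_inr]
    · rw [if_neg (by rw [Fin.cons_zero]; simp)]
      congr 1
    · rw [if_pos (by rw [Fin.cons_zero])]
      congr 1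

theorem cubeWeight_cons (n : ℕ) (x : Fin (n + 1) → Bool → R) (b b' : Bool)
    (w w' : Fin n → Bool) :
    cubeWeight (n + 1) x (Fin.cons b w) (Fin.cons b' w') =
      (if b' = !b ∧ w' = w then x 0 b' else 0) +
      (if b' = b then cubeWeight n (fun j => x j.succ) w w' else 0) := by
  unfold cubeWeight
  rw [Fin.sum_univ_succ]
  congr 1
  · rw [Fin.cons_zero, Fin.update_cons_zero]
    simp only [Fin.cons_inj, Fin.cons_zero]
  · by_cases hb : b' = b
    · rw [if_pos hb]
      refine Finset.sum_congr rfl fun j _ => ?_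
      rw [Fin.cons_succ, ← Fin.cons_update]
      simp only [Fin.cons_inj, Fin.cons_succ, hb, true_and]
    · rw [if_neg hb]
      refine Finset.sum_eq_zero fun j _ => ?_
      rw [Fin.cons_succ, ← Fin.cons_update, if_neg]
      rw [Fin.cons_inj]
      exact fun h => hb h.1

theorem reindex_cubeM (n : ℕ) (x : Fin (n + 1) → Bool → R) (t : R) :
    Matrix.reindex (splitCube n) (splitCube n) (cubeM (n + 1) x t) =
      Matrix.fromBlocks
        (cubeM n (fun j => x j.succ) (t + x 0 true))
        (-(x 0 true • (1 : Matrix (Fin n → Bool) (Fin n → Bool) R)))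
        (-(x 0 false • (1 : Matrix (Fin n → Bool) (Fin n → Bool) R)))
        (cubeM n (fun j => x j.succ) (t + x 0 false)) := by
  have hsymm : ∀ (w : Fin n → Bool),
      (splitCube n).symm (Sum.inl w) = Fin.cons false w := fun _ => rfl
  have hsymm' : ∀ (w : Fin n → Bool),
      (splitCube n).symm (Sum.inr w) = Fin.cons true w := fun _ => rfl
  have hdiagsum : ∀ (b : Bool) (w : Fin n → Bool),
      ∑ i, x i (!((Fin.cons b w : Fin (n + 1) → Bool) i)) = x 0 (!b) + ∑ j, x j.succ (!(w j)) := by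
    intro b w
    rw [Fin.sum_univ_succ, Fin.cons_zero]
    simp only [Fin.cons_succ]
  ext s s'
  rcases s with w | w <;> rcases s' with w' | w'
  · show cubeM (n + 1) x t (Fin.cons false w) (Fin.cons false w') = _
    simp only [cubeM, Matrix.of_apply, cubeWeight_cons, hdiagsum, Fin.cons_inj]
    norm_num
    by_cases h : w = w' <;> simp [h] <;> ring
  · show cubeM (n + 1) x t (Fin.cons false w) (Fin.cons true w') = _
    simp only [cubeM, Matrix.of_apply, cubeWeight_cons, Fin.cons_inj,
      Matrix.fromBlocks_apply₁₂, Matrix.neg_apply, Matrix.smul_apply, Matrix.one_apply,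
      smul_eq_mul]
    norm_num
    by_cases h : w' = w
    · simp [h]
    · simp [h, (mt Eq.symm h : ¬ w = w')]
  · show cubeM (n + 1) x t (Fin.cons true w) (Fin.cons false w') = _
    simp only [cubeM, Matrix.of_apply, cubeWeight_cons, Fin.cons_inj,
      Matrix.fromBlocks_apply₂₁, Matrix.neg_apply, Matrix.smul_apply, Matrix.one_apply,
      smul_eq_mul]
    norm_num
    by_cases h : w' = w
    · simp [h]
    · simp [h, (mt Eq.symm h : ¬ w = w')]
  · show cubeM (n + 1) x t (Fin.cons true w) (Fin.cons true w') = _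
    simp only [cubeM, Matrix.of_apply, cubeWeight_cons, hdiagsum, Fin.cons_inj]
    norm_num
    by_cases h : w = w' <;> simp [h] <;> ring

theorem det_blocks {W : Type*} [Fintype W] [DecidableEq W]
    (N : Matrix W W R) (a b : R) :
    (Matrix.fromBlocks (N + a • 1) (-(a • (1 : Matrix W W R)))
      (-(b • (1 : Matrix W W R))) (N + b • 1)).det = N.det * (N + (a + b) • 1).det := by
  have hL : (Matrix.fromBlocks (1 : Matrix W W R) (0 : Matrix W W R) (-1 : Matrix W W R) (1 : Matrix W W R)).det = 1 := by
    rw [Matrix.det_fromBlocks_zero₁₂]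
    simp
  have hR : (Matrix.fromBlocks (1 : Matrix W W R) (0 : Matrix W W R) (1 : Matrix W W R) (1 : Matrix W W R)).det = 1 := by
    rw [Matrix.det_fromBlocks_zero₁₂]
    simp
  have key : Matrix.fromBlocks (1 : Matrix W W R) (0 : Matrix W W R) (-1 : Matrix W W R) (1 : Matrix W W R) *
      (Matrix.fromBlocks (N + a • 1) (-(a • (1 : Matrix W W R)))
        (-(b • (1 : Matrix W W R))) (N + b • 1) *
       Matrix.fromBlocks (1 : Matrix W W R) (0 : Matrix W W R) (1 : Matrix W W R) (1 : Matrix W W R)) =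
      Matrix.fromBlocks N (-(a • (1 : Matrix W W R))) (0 : Matrix W W R) (N + (a + b) • 1) := by
    rw [Matrix.fromBlocks_multiply, Matrix.fromBlocks_multiply, Matrix.fromBlocks_inj]
    refine ⟨?_, ?_, ?_, ?_⟩ <;>
      simp only [Matrix.mul_one, Matrix.mul_zero, Matrix.one_mul, Matrix.zero_mul,
        Matrix.neg_mul, add_smul, neg_neg] <;>
      abel
  have hdet : (Matrix.fromBlocks (N + a • 1) (-(a • (1 : Matrix W W R)))
      (-(b • (1 : Matrix W W R))) (N + b • 1)).det =
      (Matrix.fromBlocks N (-(a • (1 : Matrix W W R))) (0 : Matrix W W R) (N + (a + b) • 1)).det := by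
    rw [← key, Matrix.det_mul, Matrix.det_mul, hL, hR, one_mul, mul_one]
  rw [hdet, Matrix.det_fromBlocks_zero₂₁]

/-- Subsets of `Fin m` as boolean vectors. -/
def finsetBoolEquiv (m : ℕ) : Finset (Fin m) ≃ (Fin m → Bool) where
  toFun S := fun i => decide (i ∈ S)
  invFun u := Finset.univ.filter (fun i => u i = true)
  left_inv S := by ext i; simp
  right_inv u := by funext i; simp

theorem prod_subsets_succ (n : ℕ) (h : Fin (n + 1) → R) (t : R) :
    ∏ S : Finset (Fin (n + 1)), (t + ∑ i ∈ S, h i) =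
      (∏ S : Finset (Fin n), (t + ∑ i ∈ S, h i.succ)) *
      ∏ S : Finset (Fin n), (t + h 0 + ∑ i ∈ S, h i.succ) := by
  have hsum : ∀ (m : ℕ) (h' : Fin m → R) (S : Finset (Fin m)),
      ∑ i ∈ S, h' i = ∑ i, if (finsetBoolEquiv m S) i then h' i else 0 := by
    intro m h' S
    simp only [finsetBoolEquiv, Equiv.coe_fn_mk, decide_eq_true_eq]
    rw [Finset.sum_ite_mem, Finset.univ_inter]
  have step3 : ∀ (b : Bool) (w : Fin n → Bool),
      (∑ i, if (Fin.cons b w : Fin (n + 1) → Bool) i then h i else 0) =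
        (if b then h 0 else 0) + ∑ j, if w j then h j.succ else 0 := by
    intro b w
    rw [Fin.sum_univ_succ, Fin.cons_zero]
    simp only [Fin.cons_succ]
  have step1 : ∏ S : Finset (Fin (n + 1)), (t + ∑ i ∈ S, h i) =
      ∏ u : Fin (n + 1) → Bool, (t + ∑ i, if u i then h i else 0) :=
    Fintype.prod_equiv (finsetBoolEquiv (n + 1))
      (fun S => t + ∑ i ∈ S, h i)
      (fun u => t + ∑ i, if u i then h i else 0)
      (fun S => by rw [hsum])
  have step2 : ∏ p : Bool × (Fin n → Bool),
        (t + ∑ i, if (Fin.cons p.1 p.2 : Fin (n + 1) → Bool) i then h i else 0) =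
      ∏ u : Fin (n + 1) → Bool, (t + ∑ i, if u i then h i else 0) :=
    Fintype.prod_equiv (Fin.consEquiv fun _ => Bool)
      (fun p => t + ∑ i, if (Fin.cons p.1 p.2 : Fin (n + 1) → Bool) i then h i else 0)
      (fun u => t + ∑ i, if u i then h i else 0)
      (fun p => rfl)
  have step4 : ∏ w : Fin n → Bool,
        (t + ∑ i, if (Fin.cons false w : Fin (n + 1) → Bool) i then h i else 0) =
      ∏ S : Finset (Fin n), (t + ∑ i ∈ S, h i.succ) := by
    refine (Fintype.prod_equiv (finsetBoolEquiv n)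
      (fun S => t + ∑ i ∈ S, h i.succ)
      (fun w => t + ∑ i, if (Fin.cons false w : Fin (n + 1) → Bool) i then h i else 0)
      (fun S => ?_)).symm
    rw [step3, hsum n (fun i => h i.succ) S]
    simp
  have step5 : ∏ w : Fin n → Bool,
        (t + ∑ i, if (Fin.cons true w : Fin (n + 1) → Bool) i then h i else 0) =
      ∏ S : Finset (Fin n), (t + h 0 + ∑ i ∈ S, h i.succ) := by
    refine (Fintype.prod_equiv (finsetBoolEquiv n)
      (fun S => t + h 0 + ∑ i ∈ S, h i.succ)
      (fun w => t + ∑ i, if (Fin.cons true w : Fin (n + 1) → Bool) i then h i else 0)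
      (fun S => ?_)).symm
    rw [step3, hsum n (fun i => h i.succ) S]
    simp [add_assoc]
  rw [step1, ← step2, Fintype.prod_prod_type, Fintype.prod_bool]
  dsimp only
  rw [step4, step5]
  rw [mul_comm]

theorem det_cubeM (n : ℕ) (x : Fin n → Bool → R) (t : R) :
    (cubeM n x t).det = ∏ S : Finset (Fin n), (t + ∑ i ∈ S, (x i false + x i true)) := by
  induction n generalizing t with
  | zero =>
      have h1 : (cubeM 0 x t).det = t := by
        rw [Matrix.det_unique]
        show (if _ then t + ∑ i : Fin 0, x i _ else 0) - cubeWeight 0 x _ _ = t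
        rw [if_pos rfl]
        unfold cubeWeight
        simp
      have h2 : (Finset.univ : Finset (Finset (Fin 0))) = {∅} := by
        ext S
        simp only [Finset.mem_univ, true_iff, Finset.mem_singleton]
        exact Finset.eq_empty_of_isEmpty S
      rw [h1, h2, Finset.prod_singleton]
      simp
  | succ n ih =>
      have h1 : (cubeM (n + 1) x t).det =
          (cubeM n (fun j => x j.succ) t).det *
          (cubeM n (fun j => x j.succ) (t + (x 0 true + x 0 false))).det := by
        rw [← Matrix.det_reindex_self (splitCube n) (cubeM (n + 1) x t), reindex_cubeM,
          cubeM_shift n _ t (x 0 true), cubeM_shift n _ t (x 0 false),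
          det_blocks (cubeM n (fun j => x j.succ) t) (x 0 true) (x 0 false),
          ← cubeM_shift]
      rw [h1, ih, ih, prod_subsets_succ n (fun i => x i false + x i true) t]
      congr 1
      refine Finset.prod_congr rfl fun S _ => ?_
      ring

end Cube

end HWFE

end HWFEAux

theorem hypercube_weighted_forest_enumerator {R : Type*} [CommRing R]
    (n : ℕ) (x : Fin n → Bool → R) (t : R) :
    forestEnum (cubeArc n) (cubeWeight n x) t =
      ∏ S : Finset (Fin n), (t + ∑ i ∈ S, (x i false + x i true)) := by
  classical
  have hdiag : ∀ v : Fin n → Bool, cubeWeight n x v v = 0 := by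
    intro v
    unfold cubeWeight
    refine Finset.sum_eq_zero fun i _ => ?_
    rw [if_neg]
    intro h
    have := congrFun h i
    simp at this
  have hA : ∀ u v : Fin n → Bool, ¬ cubeArc n u v → cubeWeight n x u v = 0 := by
    intro u v h
    unfold cubeWeight
    refine Finset.sum_eq_zero fun i _ => ?_
    rw [if_neg]
    exact fun hc => h ⟨i, hc⟩
  rw [HWFE.forestEnum_eq_det (cubeArc n) (cubeWeight n x) t hdiag hA]
  have hMeq : (Matrix.of fun v w : Fin n → Bool =>
      (if v = w then t + ∑ u, cubeWeight n x v u else 0) - cubeWeight n x v w) =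
      HWFE.cubeM n x t := by
    ext u v
    simp only [Matrix.of_apply, HWFE.cubeM, HWFE.sum_cubeWeight]
  rw [hMeq, HWFE.det_cubeM]
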